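/- Let G be a strongly regular graph with parameters (n, k, a, c) (connected, diameter 2). In the Cartesian product G □ G, the average hitting time between two distinct vertices (u_1, v_1) and (u_2, v_2) at distance 1 equals n² − 1. -/

import Mathlib

open Finset

namespace SRGAux

variable {W : Type*} [Fintype W] [DecidableEq W]

lemma inter_eq_filter_adj (Γ : SimpleGraph W) [DecidableRel Γ.Adj] (u : W) (B : Finset W) :
    Γ.neighborFinset u ∩ B = B.filter (fun w => Γ.Adj u w) := by
  ext w; simp [SimpleGraph.mem_neighborFinset, and_comm]

lemma sum_nbr_card (Γ : SimpleGraph W) [DecidableRel Γ.Adj] (A B : Finset W) :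
    ∑ u ∈ A, (Γ.neighborFinset u ∩ B).card = ∑ w ∈ B, (Γ.neighborFinset w ∩ A).card := by
  simp_rw [inter_eq_filter_adj, Finset.card_filter]
  rw [Finset.sum_comm]
  refine Finset.sum_congr rfl fun w _ => Finset.sum_congr rfl fun u _ => ?_
  simp only [Γ.adj_comm u w]

lemma sum_nbr_sum (Γ : SimpleGraph W) [∀ v : W, Fintype (Γ.neighborSet v)]
    (A : Finset W) (f : W → ℝ) :
    ∑ y ∈ A, ∑ w ∈ Γ.neighborFinset y, f w
      = ∑ w : W, ((Γ.neighborFinset w ∩ A).card : ℝ) * f w := by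
  have h1 : ∀ y, ∑ w ∈ Γ.neighborFinset y, f w
      = ∑ w : W, if w ∈ Γ.neighborFinset y then f w else 0 := by
    intro y
    rw [Finset.sum_ite_mem, Finset.univ_inter]
  simp_rw [h1]
  rw [Finset.sum_comm]
  refine Finset.sum_congr rfl fun w _ => ?_
  have h2 : ∀ y, (if w ∈ Γ.neighborFinset y then f w else 0)
      = (if y ∈ Γ.neighborFinset w then (1 : ℝ) else 0) * f w := by
    intro y
    by_cases h : Γ.Adj y w
    · simp [SimpleGraph.mem_neighborFinset, h, h.symm]
    · have h' : ¬ Γ.Adj w y := fun hc => h hc.symm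
      simp [SimpleGraph.mem_neighborFinset, h, h']
  simp_rw [h2]
  rw [← Finset.sum_mul]
  congr 1
  rw [Finset.sum_ite_mem, Finset.sum_const, nsmul_eq_mul, mul_one, Finset.inter_comm]

lemma harmonic_le_zero (Γ : SimpleGraph W) [∀ v : W, Fintype (Γ.neighborSet v)] (hconn : Γ.Connected)
    (x : W) (h : W → ℝ) (h0 : h x = 0)
    (hrec : ∀ y, y ≠ x → h y = (∑ w ∈ Γ.neighborFinset y, h w) / (Γ.degree y : ℝ)) :
    ∀ y, h y ≤ 0 := by
  obtain ⟨y0, -, hy0⟩ := Finset.exists_max_image (univ : Finset W) h ⟨x, mem_univ x⟩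
  have hclose : ∀ y w, h y = h y0 → y ≠ x → Γ.Adj y w → h w = h y0 := by
    intro y w hy hyx hadj
    by_contra hne'
    have hlt : h w < h y0 := lt_of_le_of_ne (hy0 w (mem_univ w)) hne'
    have hdegpos : 0 < Γ.degree y := by
      rw [← SimpleGraph.card_neighborFinset_eq_degree]
      exact Finset.card_pos.mpr ⟨w, (SimpleGraph.mem_neighborFinset _ _ _).mpr hadj⟩
    have hd0 : (Γ.degree y : ℝ) ≠ 0 := by positivity
    have hsum : ∑ w' ∈ Γ.neighborFinset y, h w' = h y0 * (Γ.degree y : ℝ) := by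
      have := hrec y hyx
      rw [hy] at this
      field_simp at this
      linarith [this]
    have hlt2 : ∑ w' ∈ Γ.neighborFinset y, h w'
        < ∑ _w' ∈ Γ.neighborFinset y, h y0 := by
      refine Finset.sum_lt_sum (fun i _ => hy0 i (mem_univ i)) ?_
      exact ⟨w, (SimpleGraph.mem_neighborFinset _ _ _).mpr hadj, hlt⟩
    rw [Finset.sum_const, nsmul_eq_mul, SimpleGraph.card_neighborFinset_eq_degree] at hlt2
    rw [hsum] at hlt2
    nlinarith
  have key : ∀ (z t : W) (_p : Γ.Walk z t),
      (∀ y w, h y = h y0 → y ≠ t → Γ.Adj y w → h w = h y0) → h z = h y0 → h t = h y0 := by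
    intro z t p
    induction p with
    | nil => exact fun _ hz => hz
    | @cons u v t' hadj p ih =>
        intro hcl hu
        by_cases hux : u = t'
        · rw [← hux]; exact hu
        · exact ih hcl (hcl u v hu hux hadj)
  have hxM : h x = h y0 := (hconn.preconnected y0 x).elim fun p => key y0 x p hclose rfl
  intro y
  calc h y ≤ h y0 := hy0 y (mem_univ y)
    _ = h x := hxM.symm
    _ = 0 := h0

lemma hitting_unique (Γ : SimpleGraph W) [∀ v : W, Fintype (Γ.neighborSet v)] (hconn : Γ.Connected)
    (x : W) (f g : W → ℝ) (hf0 : f x = 0) (hg0 : g x = 0)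
    (hf : ∀ y, y ≠ x → f y = 1 + (∑ w ∈ Γ.neighborFinset y, f w) / (Γ.degree y : ℝ))
    (hg : ∀ y, y ≠ x → g y = 1 + (∑ w ∈ Γ.neighborFinset y, g w) / (Γ.degree y : ℝ)) :
    ∀ y, f y = g y := by
  have hrec : ∀ y, y ≠ x → f y - g y
      = (∑ w ∈ Γ.neighborFinset y, (f w - g w)) / (Γ.degree y : ℝ) := by
    intro y hy
    rw [hf y hy, hg y hy, Finset.sum_sub_distrib, sub_div]
    ring
  have h1 := harmonic_le_zero Γ hconn x (fun y => f y - g y) (by simp [hf0, hg0]) hrec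
  have h2 := harmonic_le_zero Γ hconn x (fun y => g y - f y) (by simp [hf0, hg0])
    (by intro y hy; have := hrec y hy
        rw [show (∑ w ∈ Γ.neighborFinset y, (g w - f w)) = -∑ w ∈ Γ.neighborFinset y, (f w - g w)
          by rw [← Finset.sum_neg_distrib]; exact Finset.sum_congr rfl fun w _ => by ring]
        rw [neg_div]; linarith)
  intro y
  have := h1 y
  have := h2 y
  linarith


variable {V : Type*} [Fintype V] [DecidableEq V]

noncomputable def distC (G : SimpleGraph V) (p : V) (i : ℕ) : Finset V :=
  univ.filter (fun w => G.dist p w = i)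

def Nc (k a c : ℕ) : ℕ → ℕ → ℕ
  | 0, 1 => k
  | 1, 0 => 1
  | 1, 1 => a
  | 1, 2 => k - 1 - a
  | 2, 1 => c
  | 2, 2 => k - c
  | _, _ => 0

def mcl (n k : ℕ) : ℕ → ℕ
  | 0 => 1
  | 1 => k
  | 2 => n - 1 - k
  | _ => 0

lemma mem_distC {G : SimpleGraph V} {p w : V} {i : ℕ} :
    w ∈ distC G p i ↔ G.dist p w = i := by simp [distC]

lemma distC_zero (G : SimpleGraph V) (hconn : G.Connected) (p : V) :
    distC G p 0 = {p} := by
  ext w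
  simp [mem_distC, hconn.dist_eq_zero_iff, eq_comm]

lemma distC_one (G : SimpleGraph V) [DecidableRel G.Adj] (p : V) :
    distC G p 1 = G.neighborFinset p := by
  ext w
  simp [mem_distC, SimpleGraph.dist_eq_one_iff_adj, SimpleGraph.mem_neighborFinset]

lemma inter_distC (G : SimpleGraph V) [DecidableRel G.Adj] (u p : V) (j : ℕ) :
    G.neighborFinset u ∩ distC G p j
      = (G.neighborFinset u).filter (fun w => G.dist p w = j) := by
  ext w; simp [mem_distC, Finset.mem_filter]

section Main
variable (G : SimpleGraph V) [DecidableRel G.Adj] {n k a c : ℕ}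
variable (hn : Fintype.card V = n) (hreg : G.IsRegularOfDegree k)
variable (hconn : G.Connected) (hdiam : ∀ u v : V, G.dist u v ≤ 2)
variable (ha : ∀ u v : V, G.Adj u v → (G.neighborFinset u ∩ G.neighborFinset v).card = a)
variable (hc : ∀ u v : V, u ≠ v → ¬G.Adj u v →
    (G.neighborFinset u ∩ G.neighborFinset v).card = c)

include hn hreg hconn hdiam in
lemma card_distC (p : V) : ∀ i ≤ 2, (distC G p i).card = mcl n k i := by
  have h0 : (distC G p 0).card = 1 := by rw [distC_zero G hconn]; simp
  have h1 : (distC G p 1).card = k := by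
    rw [distC_one G p, SimpleGraph.card_neighborFinset_eq_degree, hreg p]
  have hpart : ∑ i ∈ range 3, (distC G p i).card = n := by
    rw [← hn, ← Finset.card_univ]
    exact (Finset.card_eq_sum_card_fiberwise
      (f := fun w => G.dist p w) (t := range 3)
      (fun w _ => Finset.mem_range.mpr (by show G.dist p w < 3; have := hdiam p w; omega))).symm
  rw [Finset.sum_range_succ, Finset.sum_range_succ, Finset.sum_range_one] at hpart
  intro i hi
  interval_cases i
  · exact h0
  · exact h1
  · simp only [mcl]; omega

include hn hreg hconn hdiam ha hc in
lemma nbrC (p u : V) : ∀ j ≤ 2,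
    (G.neighborFinset u ∩ distC G p j).card = Nc k a c (G.dist p u) j := by
  have hi : G.dist p u ≤ 2 := hdiam p u
  have h0 : (G.neighborFinset u ∩ distC G p 0).card = Nc k a c (G.dist p u) 0 := by
    rw [distC_zero G hconn]
    rcases (by omega : G.dist p u = 0 ∨ G.dist p u = 1 ∨ G.dist p u = 2) with h | h | h
    · have hup : u = p := (hconn.dist_eq_zero_iff.mp h).symm
      rw [h]
      rw [Finset.inter_singleton_of_notMem (by
        subst hup; simp [SimpleGraph.mem_neighborFinset])]
      simp [Nc]
    · have hadj : G.Adj p u := SimpleGraph.dist_eq_one_iff_adj.mp h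
      rw [h, Finset.inter_singleton_of_mem
        ((SimpleGraph.mem_neighborFinset _ _ _).mpr hadj.symm)]
      simp [Nc]
    · have hnadj : ¬ G.Adj u p := fun hadj => by
        rw [SimpleGraph.dist_eq_one_iff_adj.mpr hadj.symm] at h; omega
      rw [h, Finset.inter_singleton_of_notMem (by
        simp [SimpleGraph.mem_neighborFinset, hnadj])]
      simp [Nc]
  have h1 : (G.neighborFinset u ∩ distC G p 1).card = Nc k a c (G.dist p u) 1 := by
    rw [distC_one G p]
    rcases (by omega : G.dist p u = 0 ∨ G.dist p u = 1 ∨ G.dist p u = 2) with h | h | h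
    · have hup : u = p := (hconn.dist_eq_zero_iff.mp h).symm
      subst hup
      rw [h, Finset.inter_self, SimpleGraph.card_neighborFinset_eq_degree, hreg u]
      simp [Nc]
    · have hadj : G.Adj u p := (SimpleGraph.dist_eq_one_iff_adj.mp h).symm
      rw [h, ha u p hadj]
      simp [Nc]
    · have hnadj : ¬ G.Adj u p := fun hadj => by
        rw [SimpleGraph.dist_eq_one_iff_adj.mpr hadj.symm] at h; omega
      have hup : u ≠ p := fun hup => by
        rw [hup, SimpleGraph.dist_self] at h; omega
      rw [h, hc u p hup hnadj]
      simp [Nc]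
  have hsum : (G.neighborFinset u ∩ distC G p 0).card
      + (G.neighborFinset u ∩ distC G p 1).card
      + (G.neighborFinset u ∩ distC G p 2).card = k := by
    have := Finset.card_eq_sum_card_fiberwise
      (f := fun w => G.dist p w) (t := range 3) (s := G.neighborFinset u)
      (fun w _ => Finset.mem_range.mpr (by show G.dist p w < 3; have := hdiam p w; omega))
    rw [SimpleGraph.card_neighborFinset_eq_degree, hreg u] at this
    beta_reduce at this
    rw [Finset.sum_range_succ, Finset.sum_range_succ, Finset.sum_range_one] at this
    rw [← inter_distC, ← inter_distC, ← inter_distC] at this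
    omega
  intro j hj
  interval_cases j
  · exact h0
  · exact h1
  · rcases (by omega : G.dist p u = 0 ∨ G.dist p u = 1 ∨ G.dist p u = 2) with h | h | h <;>
      rw [h] at h0 h1 ⊢ <;> simp only [Nc] at h0 h1 ⊢ <;> omega

include hn hreg hconn hdiam ha hc in
lemma rev (p : V) : ∀ i ≤ 2, ∀ j ≤ 2,
    mcl n k i * Nc k a c i j = mcl n k j * Nc k a c j i := by
  intro i hi j hj
  have h1 : ∑ u ∈ distC G p i, (G.neighborFinset u ∩ distC G p j).card
      = mcl n k i * Nc k a c i j := by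
    rw [Finset.sum_congr rfl (fun u hu => by
      rw [nbrC G hn hreg hconn hdiam ha hc p u j hj, mem_distC.mp hu])]
    rw [Finset.sum_const, card_distC G hn hreg hconn hdiam p i hi, smul_eq_mul]
  have h2 : ∑ u ∈ distC G p j, (G.neighborFinset u ∩ distC G p i).card
      = mcl n k j * Nc k a c j i := by
    rw [Finset.sum_congr rfl (fun u hu => by
      rw [nbrC G hn hreg hconn hdiam ha hc p u i hi, mem_distC.mp hu])]
    rw [Finset.sum_const, card_distC G hn hreg hconn hdiam p j hj, smul_eq_mul]
  rw [← h1, ← h2, sum_nbr_card]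

include hdiam in
lemma nbr_class_sum (u p : V) (φ : ℕ → ℝ) :
    ∑ w ∈ G.neighborFinset u, φ (G.dist p w)
      = ∑ i' ∈ range 3, ((G.neighborFinset u ∩ distC G p i').card : ℝ) * φ i' := by
  rw [← Finset.sum_fiberwise_of_maps_to
    (g := fun w => G.dist p w) (t := range 3)
    (fun w _ => Finset.mem_range.mpr (by show G.dist p w < 3; have := hdiam p w; omega))
    (fun w => φ (G.dist p w))]
  beta_reduce
  refine Finset.sum_congr rfl fun i' _ => ?_
  rw [inter_distC]
  rw [Finset.sum_congr rfl (fun w hw => by rw [(Finset.mem_filter.mp hw).2])]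
  rw [Finset.sum_const, nsmul_eq_mul]

include hn hreg hconn hdiam ha hc in
lemma class_nbr_sum (p : V) (i : ℕ) (hi : i ≤ 2) (f : V → ℝ) :
    ∑ y ∈ distC G p i, ∑ w ∈ G.neighborFinset y, f w
      = ∑ i' ∈ range 3, (Nc k a c i' i : ℝ) * ∑ w ∈ distC G p i', f w := by
  rw [sum_nbr_sum]
  rw [← Finset.sum_fiberwise_of_maps_to
    (g := fun w => G.dist p w) (t := range 3)
    (fun w _ => Finset.mem_range.mpr (by show G.dist p w < 3; have := hdiam p w; omega))
    (fun w => ((G.neighborFinset w ∩ distC G p i).card : ℝ) * f w)]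
  beta_reduce
  refine Finset.sum_congr rfl fun i' _ => ?_
  rw [Finset.mul_sum]
  refine Finset.sum_congr rfl fun w hw => ?_
  have hw' : G.dist p w = i' := (Finset.mem_filter.mp hw).2
  rw [nbrC G hn hreg hconn hdiam ha hc p w i hi, hw']

end Main

end SRGAux
section DTest
open Finset SRGAux

variable {V : Type*} [Fintype V] [DecidableEq V]

namespace SRGAux

noncomputable def classAvg (G : SimpleGraph V) (Hx : V × V → ℝ) (n k : ℕ)
    (x : V × V) (i j : ℕ) : ℝ :=
  (∑ z ∈ distC G x.1 i ×ˢ distC G x.2 j, Hx z) / ((mcl n k i * mcl n k j : ℕ) : ℝ)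

lemma boxProd_nbr_sum (G : SimpleGraph V) [DecidableRel G.Adj] (z : V × V)
    (f : V × V → ℝ) :
    ∑ w ∈ (G □ G).neighborFinset z, f w
      = (∑ w1 ∈ G.neighborFinset z.1, f (w1, z.2))
        + ∑ w2 ∈ G.neighborFinset z.2, f (z.1, w2) := by
  rw [SimpleGraph.neighborFinset_boxProd, Finset.sum_disjUnion]
  congr 1
  · rw [Finset.sum_product]; simp
  · rw [Finset.sum_product]; simp

lemma boxProd_deg (G : SimpleGraph V) [DecidableRel G.Adj] {k : ℕ}
    (hreg : G.IsRegularOfDegree k) (z : V × V) :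
    (G □ G).degree z = 2 * k := by
  rw [SimpleGraph.degree_boxProd, hreg z.1, hreg z.2]; omega

section Main2
variable (G : SimpleGraph V) [DecidableRel G.Adj] {n k a c : ℕ}
variable (hn : Fintype.card V = n) (hreg : G.IsRegularOfDegree k)
variable (hconn : G.Connected) (hdiam : ∀ u v : V, G.dist u v ≤ 2)
variable (ha : ∀ u v : V, G.Adj u v → (G.neighborFinset u ∩ G.neighborFinset v).card = a)
variable (hc : ∀ u v : V, u ≠ v → ¬G.Adj u v →
    (G.neighborFinset u ∩ G.neighborFinset v).card = c)

include hn hreg hconn hdiam in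
lemma sum_eq_classAvg (Hx : V × V → ℝ) (x : V × V) (i j : ℕ) (hi : i ≤ 2) (hj : j ≤ 2) :
    ∑ z ∈ distC G x.1 i ×ˢ distC G x.2 j, Hx z
      = ((mcl n k i * mcl n k j : ℕ) : ℝ) * classAvg G Hx n k x i j := by
  by_cases h : mcl n k i * mcl n k j = 0
  · have hprod : (distC G x.1 i ×ˢ distC G x.2 j) = ∅ := by
      rcases Nat.mul_eq_zero.mp h with h' | h'
      · have h2 : (distC G x.1 i).card = 0 := by
          rw [card_distC G hn hreg hconn hdiam x.1 i hi, h']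
        rw [Finset.card_eq_zero] at h2; rw [h2, Finset.empty_product]
      · have h2 : (distC G x.2 j).card = 0 := by
          rw [card_distC G hn hreg hconn hdiam x.2 j hj, h']
        rw [Finset.card_eq_zero] at h2; rw [h2, Finset.product_empty]
    rw [hprod, Finset.sum_empty, h]; simp
  · rw [classAvg, mul_comm, div_mul_cancel₀ _ (Nat.cast_ne_zero.mpr h)]

include hn hreg hconn hdiam ha hc in
lemma classAvg_red (hk : 0 < k) (x : V × V) (Hx : V × V → ℝ)
    (hHrec : ∀ z : V × V, z ≠ x →
      Hx z = 1 + (∑ w ∈ (G □ G).neighborFinset z, Hx w) / ((G □ G).degree z : ℝ)) :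
    ∀ i j, i ≤ 2 → j ≤ 2 → mcl n k i ≠ 0 → mcl n k j ≠ 0 → ¬(i = 0 ∧ j = 0) →
      classAvg G Hx n k x i j
        = 1 + ((∑ i' ∈ range 3, (Nc k a c i i' : ℝ) * classAvg G Hx n k x i' j)
            + ∑ j' ∈ range 3, (Nc k a c j j' : ℝ) * classAvg G Hx n k x i j') / (2 * k) := by
  intro i j hi hj hmi hmj hij
  have hk2 : (2 * (k : ℝ)) ≠ 0 := by positivity
  have hmij : ((mcl n k i * mcl n k j : ℕ) : ℝ) ≠ 0 :=
    Nat.cast_ne_zero.mpr (Nat.mul_ne_zero hmi hmj)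
  have hz_ne : ∀ z ∈ distC G x.1 i ×ˢ distC G x.2 j, z ≠ x := by
    intro z hz hzx
    rcases Finset.mem_product.mp hz with ⟨h1, h2⟩
    have e1 : G.dist x.1 z.1 = i := mem_distC.mp h1
    have e2 : G.dist x.2 z.2 = j := mem_distC.mp h2
    rw [hzx, SimpleGraph.dist_self] at e1 e2
    exact hij ⟨e1.symm, e2.symm⟩
  have hdegR : ∀ z : V × V, ((G □ G).degree z : ℝ) = 2 * (k : ℝ) := by
    intro z; rw [boxProd_deg G hreg z]; push_cast; ring
  -- step A
  have stepA : ∑ z ∈ distC G x.1 i ×ˢ distC G x.2 j,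
        (∑ w1 ∈ G.neighborFinset z.1, Hx (w1, z.2))
      = ∑ i' ∈ range 3, (Nc k a c i' i : ℝ)
          * ∑ z ∈ distC G x.1 i' ×ˢ distC G x.2 j, Hx z := by
    rw [Finset.sum_product]
    rw [Finset.sum_comm]
    have h1 : ∀ y2 ∈ distC G x.2 j,
        ∑ y1 ∈ distC G x.1 i, ∑ w1 ∈ G.neighborFinset y1, Hx (w1, y2)
          = ∑ i' ∈ range 3, (Nc k a c i' i : ℝ) * ∑ w1 ∈ distC G x.1 i', Hx (w1, y2) :=
      fun y2 _ => class_nbr_sum G hn hreg hconn hdiam ha hc x.1 i hi (fun w1 => Hx (w1, y2))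
    rw [Finset.sum_congr rfl h1, Finset.sum_comm]
    refine Finset.sum_congr rfl fun i' _ => ?_
    rw [← Finset.mul_sum]
    congr 1
    rw [Finset.sum_product]
    exact Finset.sum_comm
  -- step B
  have stepB : ∑ z ∈ distC G x.1 i ×ˢ distC G x.2 j,
        (∑ w2 ∈ G.neighborFinset z.2, Hx (z.1, w2))
      = ∑ j' ∈ range 3, (Nc k a c j' j : ℝ)
          * ∑ z ∈ distC G x.1 i ×ˢ distC G x.2 j', Hx z := by
    rw [Finset.sum_product]
    have h1 : ∀ y1 ∈ distC G x.1 i,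
        ∑ y2 ∈ distC G x.2 j, ∑ w2 ∈ G.neighborFinset y2, Hx (y1, w2)
          = ∑ j' ∈ range 3, (Nc k a c j' j : ℝ) * ∑ w2 ∈ distC G x.2 j', Hx (y1, w2) :=
      fun y1 _ => class_nbr_sum G hn hreg hconn hdiam ha hc x.2 j hj (fun w2 => Hx (y1, w2))
    rw [Finset.sum_congr rfl h1, Finset.sum_comm]
    refine Finset.sum_congr rfl fun j' _ => ?_
    rw [← Finset.mul_sum]
    congr 1
    rw [Finset.sum_product]
  have key : ∑ z ∈ distC G x.1 i ×ˢ distC G x.2 j, Hx z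
      = ((mcl n k i * mcl n k j : ℕ) : ℝ)
        + ((∑ i' ∈ range 3, (Nc k a c i' i : ℝ)
              * ∑ z ∈ distC G x.1 i' ×ˢ distC G x.2 j, Hx z)
          + ∑ j' ∈ range 3, (Nc k a c j' j : ℝ)
              * ∑ z ∈ distC G x.1 i ×ˢ distC G x.2 j', Hx z) / (2 * (k : ℝ)) := by
    rw [Finset.sum_congr rfl (fun z hz => hHrec z (hz_ne z hz))]
    rw [Finset.sum_add_distrib]
    congr 1
    · rw [Finset.sum_const, Finset.card_product,
        card_distC G hn hreg hconn hdiam x.1 i hi,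
        card_distC G hn hreg hconn hdiam x.2 j hj, nsmul_eq_mul, mul_one]
    · simp only [hdegR]
      rw [← Finset.sum_div]
      rw [← stepA, ← stepB, ← Finset.sum_add_distrib]
      congr 1
      exact Finset.sum_congr rfl fun z _ => boxProd_nbr_sum G z Hx
  -- convert sums to classAvg form
  have hconv1 : ∀ i' ∈ range 3, (Nc k a c i' i : ℝ)
        * ∑ z ∈ distC G x.1 i' ×ˢ distC G x.2 j, Hx z
      = ((mcl n k i * mcl n k j : ℕ) : ℝ)
        * ((Nc k a c i i' : ℝ) * classAvg G Hx n k x i' j) := by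
    intro i' hi'
    have hi'2 : i' ≤ 2 := by have := Finset.mem_range.mp hi'; omega
    rw [sum_eq_classAvg G hn hreg hconn hdiam Hx x i' j hi'2 hj]
    have hrev := rev G hn hreg hconn hdiam ha hc x.1 i' hi'2 i hi
    have hrevR : (mcl n k i' : ℝ) * (Nc k a c i' i : ℝ)
        = (mcl n k i : ℝ) * (Nc k a c i i' : ℝ) := by exact_mod_cast hrev
    push_cast
    linear_combination ((mcl n k j : ℝ) * classAvg G Hx n k x i' j) * hrevR
  have hconv2 : ∀ j' ∈ range 3, (Nc k a c j' j : ℝ)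
        * ∑ z ∈ distC G x.1 i ×ˢ distC G x.2 j', Hx z
      = ((mcl n k i * mcl n k j : ℕ) : ℝ)
        * ((Nc k a c j j' : ℝ) * classAvg G Hx n k x i j') := by
    intro j' hj'
    have hj'2 : j' ≤ 2 := by have := Finset.mem_range.mp hj'; omega
    rw [sum_eq_classAvg G hn hreg hconn hdiam Hx x i j' hi hj'2]
    have hrev := rev G hn hreg hconn hdiam ha hc x.2 j' hj'2 j hj
    have hrevR : (mcl n k j' : ℝ) * (Nc k a c j' j : ℝ)
        = (mcl n k j : ℝ) * (Nc k a c j j' : ℝ) := by exact_mod_cast hrev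
    push_cast
    linear_combination ((mcl n k i : ℝ) * classAvg G Hx n k x i j') * hrevR
  have hFdef : classAvg G Hx n k x i j
      = (∑ z ∈ distC G x.1 i ×ˢ distC G x.2 j, Hx z)
        / ((mcl n k i * mcl n k j : ℕ) : ℝ) := rfl
  rw [hFdef, key, Finset.sum_congr rfl hconv1, Finset.sum_congr rfl hconv2,
    ← Finset.mul_sum, ← Finset.mul_sum, ← mul_add]
  field_simp

end Main2
end SRGAux
end DTest
section FTest
open Finset SRGAux

variable {V : Type*} [Fintype V] [DecidableEq V]

namespace SRGAux
section Main3
variable (G : SimpleGraph V) [DecidableRel G.Adj] {n k a c : ℕ}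
variable (hn : Fintype.card V = n) (hreg : G.IsRegularOfDegree k)
variable (hconn : G.Connected) (hdiam : ∀ u v : V, G.dist u v ≤ 2)
variable (ha : ∀ u v : V, G.Adj u v → (G.neighborFinset u ∩ G.neighborFinset v).card = a)
variable (hc : ∀ u v : V, u ≠ v → ¬G.Adj u v →
    (G.neighborFinset u ∩ G.neighborFinset v).card = c)

include hn hreg hconn hdiam ha hc in
lemma lifted_rec (x : V × V) (Φ : ℕ → ℕ → ℝ)
    (hΦ : ∀ i j, i ≤ 2 → j ≤ 2 → mcl n k i ≠ 0 → mcl n k j ≠ 0 → ¬(i = 0 ∧ j = 0) →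
      Φ i j = 1 + ((∑ i' ∈ range 3, (Nc k a c i i' : ℝ) * Φ i' j)
          + ∑ j' ∈ range 3, (Nc k a c j j' : ℝ) * Φ i j') / (2 * k)) :
    ∀ z : V × V, z ≠ x →
      Φ (G.dist x.1 z.1) (G.dist x.2 z.2)
        = 1 + (∑ w ∈ (G □ G).neighborFinset z, Φ (G.dist x.1 w.1) (G.dist x.2 w.2))
            / ((G □ G).degree z : ℝ) := by
  intro z hz
  have hi : G.dist x.1 z.1 ≤ 2 := hdiam _ _
  have hj : G.dist x.2 z.2 ≤ 2 := hdiam _ _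
  have hmi : mcl n k (G.dist x.1 z.1) ≠ 0 := by
    rw [← card_distC G hn hreg hconn hdiam x.1 _ hi]
    exact Finset.card_ne_zero_of_mem (mem_distC.mpr rfl)
  have hmj : mcl n k (G.dist x.2 z.2) ≠ 0 := by
    rw [← card_distC G hn hreg hconn hdiam x.2 _ hj]
    exact Finset.card_ne_zero_of_mem (mem_distC.mpr rfl)
  have hij : ¬(G.dist x.1 z.1 = 0 ∧ G.dist x.2 z.2 = 0) := by
    rintro ⟨h1, h2⟩
    exact hz (Prod.ext (hconn.dist_eq_zero_iff.mp h1).symm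
      (hconn.dist_eq_zero_iff.mp h2).symm)
  have hnb : ∑ w ∈ (G □ G).neighborFinset z, Φ (G.dist x.1 w.1) (G.dist x.2 w.2)
      = (∑ i' ∈ range 3, (Nc k a c (G.dist x.1 z.1) i' : ℝ) * Φ i' (G.dist x.2 z.2))
        + ∑ j' ∈ range 3, (Nc k a c (G.dist x.2 z.2) j' : ℝ) * Φ (G.dist x.1 z.1) j' := by
    rw [boxProd_nbr_sum G z (fun w => Φ (G.dist x.1 w.1) (G.dist x.2 w.2))]
    congr 1
    · rw [nbr_class_sum G hdiam z.1 x.1 (fun t => Φ t (G.dist x.2 z.2))]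
      refine Finset.sum_congr rfl fun i' _ => ?_
      rw [nbrC G hn hreg hconn hdiam ha hc x.1 z.1 i' (by
        have := Finset.mem_range.mp ‹i' ∈ range 3›; omega)]
    · rw [nbr_class_sum G hdiam z.2 x.2 (fun t => Φ (G.dist x.1 z.1) t)]
      refine Finset.sum_congr rfl fun j' _ => ?_
      rw [nbrC G hn hreg hconn hdiam ha hc x.2 z.2 j' (by
        have := Finset.mem_range.mp ‹j' ∈ range 3›; omega)]
  rw [hnb, boxProd_deg G hreg z]
  push_cast
  exact hΦ _ _ hi hj hmi hmj hij

end Main3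
end SRGAux
end FTest
section MainProof
open Finset SRGAux

/-- Let `G` be a (connected, diameter-2) strongly regular graph with
parameters `(n, k, a, c)`.  In the Cartesian product `G □ G`, the average hitting
time `H` (characterized by `H x x = 0` and the one-step recurrence) between two
adjacent vertices equals `n² − 1`. -/
theorem srg_boxProd_adjacent_hitting_time {V : Type*} [Fintype V] [DecidableEq V]
    (G : SimpleGraph V) [DecidableRel G.Adj]
    (n k a c : ℕ) (hn : Fintype.card V = n) (hreg : G.IsRegularOfDegree k)
    (hconn : G.Connected) (hdiam : ∀ u v : V, G.dist u v ≤ 2)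
    (ha : ∀ u v : V, G.Adj u v →
      (G.neighborFinset u ∩ G.neighborFinset v).card = a)
    (hc : ∀ u v : V, u ≠ v → ¬G.Adj u v →
      (G.neighborFinset u ∩ G.neighborFinset v).card = c)
    (H : V × V → V × V → ℝ) (hH0 : ∀ x : V × V, H x x = 0)
    (hHrec : ∀ x y : V × V, y ≠ x →
      H x y = 1 + (∑ w ∈ (G □ G).neighborFinset y, H x w) / ((G □ G).degree y : ℝ)) :
    ∀ x y : V × V, (G □ G).Adj x y → H x y = (n : ℝ) ^ 2 - 1 := by
  intro x y hxy
  -- k is positive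
  have hk : 0 < k := by
    have hex : ∃ u v : V, G.Adj u v := by
      rcases SimpleGraph.boxProd_adj.mp hxy with ⟨h1, -⟩ | ⟨h1, -⟩
      exacts [⟨_, _, h1⟩, ⟨_, _, h1⟩]
    obtain ⟨u, v, huv⟩ := hex
    have h1 : 0 < G.degree u := by
      rw [← SimpleGraph.card_neighborFinset_eq_degree]
      exact Finset.card_pos.mpr ⟨v, (SimpleGraph.mem_neighborFinset _ _ _).mpr huv⟩
    rwa [hreg u] at h1
  have hkR : (2 * (k : ℝ)) ≠ 0 := by positivity
  have hn1 : 0 < n := by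
    rw [← hn]
    exact Fintype.card_pos_iff.mpr ⟨x.1⟩
  have hGGconn : (G □ G).Connected := SimpleGraph.connected_boxProd.mpr ⟨hconn, hconn⟩
  -- the class-average function and its swapped version
  set F : ℕ → ℕ → ℝ := fun i j => classAvg G (H x) n k x i j with hFdef
  have hRedF := classAvg_red G hn hreg hconn hdiam ha hc hk x (H x)
    (fun z hz => hHrec x z hz)
  have hRedF' : ∀ i j, i ≤ 2 → j ≤ 2 → mcl n k i ≠ 0 → mcl n k j ≠ 0 → ¬(i = 0 ∧ j = 0) →
      F j i = 1 + ((∑ i' ∈ range 3, (Nc k a c i i' : ℝ) * F j i')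
          + ∑ j' ∈ range 3, (Nc k a c j j' : ℝ) * F j' i) / (2 * k) := by
    intro i j hi hj hmi hmj hij
    simp only [hFdef]
    rw [hRedF j i hj hi hmj hmi (by tauto)]
    ring
  have hF00 : F 0 0 = 0 := by
    have hs : distC G x.1 0 ×ˢ distC G x.2 0 = {x} := by
      rw [distC_zero G hconn, distC_zero G hconn]
      ext z
      simp [Finset.mem_product, Prod.ext_iff]
    rw [hFdef]
    show (∑ z ∈ distC G x.1 0 ×ˢ distC G x.2 0, H x z) / ((mcl n k 0 * mcl n k 0 : ℕ) : ℝ) = 0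
    rw [hs, Finset.sum_singleton, hH0 x, zero_div]
  -- H x z equals F of the distance classes, in both orders
  have hHF : ∀ z : V × V, H x z = F (G.dist x.1 z.1) (G.dist x.2 z.2) := by
    apply hitting_unique (G □ G) hGGconn x (H x)
      (fun z => F (G.dist x.1 z.1) (G.dist x.2 z.2))
    · exact hH0 x
    · simp only [SimpleGraph.dist_self]; exact hF00
    · exact fun z hz => hHrec x z hz
    · exact lifted_rec G hn hreg hconn hdiam ha hc x F
        (fun i j hi hj hmi hmj hij => hRedF i j hi hj hmi hmj hij)
  have hHF' : ∀ z : V × V, H x z = F (G.dist x.2 z.2) (G.dist x.1 z.1) := by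
    apply hitting_unique (G □ G) hGGconn x (H x)
      (fun z => (fun i j => F j i) (G.dist x.1 z.1) (G.dist x.2 z.2))
    · exact hH0 x
    · simp only [SimpleGraph.dist_self]; exact hF00
    · exact fun z hz => hHrec x z hz
    · exact lifted_rec G hn hreg hconn hdiam ha hc x (fun i j => F j i)
        (fun i j hi hj hmi hmj hij => hRedF' i j hi hj hmi hmj hij)
  -- global sum identity: sum of H x over neighbors of x equals 2k (n^2 - 1)
  have hdegR : ∀ z : V × V, ((G □ G).degree z : ℝ) = 2 * (k : ℝ) := by
    intro z; rw [boxProd_deg G hreg z]; push_cast; ring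
  have hcardVV : (Finset.univ : Finset (V × V)).card = n * n := by
    rw [Finset.card_univ, Fintype.card_prod, hn]
  have hT5 : ∑ z : V × V, H x z = ∑ z ∈ Finset.univ.erase x, H x z := by
    rw [← Finset.sum_erase_add Finset.univ _ (Finset.mem_univ x), hH0 x, add_zero]
  have hT4 : ∑ z : V × V, ∑ w ∈ (G □ G).neighborFinset z, H x w
      = (2 * (k : ℝ)) * ∑ z : V × V, H x z := by
    rw [sum_nbr_sum (G □ G) Finset.univ (H x), Finset.mul_sum]
    refine Finset.sum_congr rfl fun w _ => ?_
    rw [Finset.inter_univ, SimpleGraph.card_neighborFinset_eq_degree, hdegR w]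
  have hT3 : ∑ z ∈ Finset.univ.erase x, ∑ w ∈ (G □ G).neighborFinset z, H x w
      = (∑ z : V × V, ∑ w ∈ (G □ G).neighborFinset z, H x w)
        - ∑ w ∈ (G □ G).neighborFinset x, H x w := by
    rw [← Finset.sum_erase_add Finset.univ
      (fun z => ∑ w ∈ (G □ G).neighborFinset z, H x w) (Finset.mem_univ x)]
    ring
  have hT2 : ∑ z ∈ Finset.univ.erase x, H x z
      = ((n * n - 1 : ℕ) : ℝ)
        + (∑ z ∈ Finset.univ.erase x, ∑ w ∈ (G □ G).neighborFinset z, H x w)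
          / (2 * (k : ℝ)) := by
    rw [Finset.sum_congr rfl
      (fun z hz => hHrec x z (Finset.ne_of_mem_erase hz))]
    rw [Finset.sum_add_distrib, Finset.sum_const,
      Finset.card_erase_of_mem (Finset.mem_univ x), hcardVV, nsmul_eq_mul, mul_one]
    congr 1
    simp only [hdegR]
    rw [← Finset.sum_div]
  have hQ : ∑ w ∈ (G □ G).neighborFinset x, H x w
      = (2 * (k : ℝ)) * ((n * n - 1 : ℕ) : ℝ) := by
    have h1 := hT2
    rw [hT3, hT4, hT5] at h1
    have h1' : (∑ z ∈ Finset.univ.erase x, H x z) - ((n * n - 1 : ℕ) : ℝ)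
        = ((2 * (k : ℝ)) * ∑ z ∈ Finset.univ.erase x, H x z
            - ∑ w ∈ (G □ G).neighborFinset x, H x w) / (2 * (k : ℝ)) := by
      linarith [h1]
    rw [eq_div_iff hkR] at h1'
    linear_combination h1'
  -- neighbors of x all have H-value F 0 1
  have hval1 : ∀ w1 ∈ G.neighborFinset x.1, H x (w1, x.2) = F 0 1 := by
    intro w1 hw1
    have hadj : G.Adj x.1 w1 := (SimpleGraph.mem_neighborFinset _ _ _).mp hw1
    have := hHF' (w1, x.2)
    rw [this]
    norm_num [SimpleGraph.dist_self, SimpleGraph.dist_eq_one_iff_adj.mpr hadj]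
  have hval2 : ∀ w2 ∈ G.neighborFinset x.2, H x (x.1, w2) = F 0 1 := by
    intro w2 hw2
    have hadj : G.Adj x.2 w2 := (SimpleGraph.mem_neighborFinset _ _ _).mp hw2
    have := hHF (x.1, w2)
    rw [this]
    norm_num [SimpleGraph.dist_self, SimpleGraph.dist_eq_one_iff_adj.mpr hadj]
  have hQ2 : ∑ w ∈ (G □ G).neighborFinset x, H x w = (2 * (k : ℝ)) * F 0 1 := by
    rw [boxProd_nbr_sum G x (H x)]
    rw [Finset.sum_congr rfl hval1, Finset.sum_congr rfl hval2,
      Finset.sum_const, Finset.sum_const,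
      SimpleGraph.card_neighborFinset_eq_degree, SimpleGraph.card_neighborFinset_eq_degree,
      hreg x.1, hreg x.2, nsmul_eq_mul]
    ring
  have hF01 : F 0 1 = ((n * n - 1 : ℕ) : ℝ) := by
    have h := hQ2.symm.trans hQ
    exact mul_left_cancel₀ hkR h
  have hcast : ((n * n - 1 : ℕ) : ℝ) = (n : ℝ) ^ 2 - 1 := by
    have : 1 ≤ n * n := Nat.one_le_iff_ne_zero.mpr (Nat.mul_ne_zero (by omega) (by omega))
    push_cast [Nat.cast_sub this]
    ring
  -- finish by cases on the box-product adjacency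
  rcases SimpleGraph.boxProd_adj.mp hxy with ⟨hadj, heq⟩ | ⟨hadj, heq⟩
  · rw [hHF' y, ← heq, SimpleGraph.dist_self,
      SimpleGraph.dist_eq_one_iff_adj.mpr hadj, ← hcast, hF01]
  · rw [hHF y, ← heq, SimpleGraph.dist_self,
      SimpleGraph.dist_eq_one_iff_adj.mpr hadj, ← hcast, hF01]

end MainProof
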